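/- Let Q be a quantaloid and Φ : D ⇸ E a Q-distributor between Q-categories. Then a separated total Q-category X is isomorphic to MΦ := Fix(Φ↓Φ↑) if and only if there exist a dense Q-functor F : D → X and a codense Q-functor G : E → X such that Φ(A,B) = X(FA,GB) for all A ∈ D₀ and B ∈ E₀. -/

import Mathlib

universe u

/-- A quantaloid: a category whose hom-sets are complete lattices and whose
composition preserves arbitrary joins in each variable. -/
structure Quantaloid : Type (u + 1) where
  Obj : Type u
  Hom : Obj → Obj → Type u
  [lat : ∀ S T : Obj, CompleteLattice (Hom S T)]
  comp : ∀ {S T U : Obj}, Hom T U → Hom S T → Hom S U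
  one : ∀ S : Obj, Hom S S
  comp_assoc : ∀ {S T U V : Obj} (w : Hom U V) (v : Hom T U) (u : Hom S T),
      comp (comp w v) u = comp w (comp v u)
  comp_one : ∀ {S T : Obj} (u : Hom S T), comp u (one S) = u
  one_comp : ∀ {S T : Obj} (u : Hom S T), comp (one T) u = u
  comp_sSup : ∀ {S T U : Obj} (v : Hom T U) (s : Set (Hom S T)),
      comp v (sSup s) = ⨆ u ∈ s, comp v u
  sSup_comp : ∀ {S T U : Obj} (s : Set (Hom T U)) (u : Hom S T),
      comp (sSup s) u = ⨆ v ∈ s, comp v u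

attribute [instance] Quantaloid.lat

namespace Quantaloid

variable (Q : Quantaloid.{u})

/-- The left implication `w ↙ u`, characterized by `v ∘ u ≤ w ↔ v ≤ w ↙ u`. -/
def lda {S T U : Q.Obj} (w : Q.Hom S U) (u : Q.Hom S T) : Q.Hom T U :=
  sSup {v | Q.comp v u ≤ w}

/-- The right implication `v ↘ w`, characterized by `v ∘ u ≤ w ↔ u ≤ v ↘ w`. -/
def rda {S T U : Q.Obj} (v : Q.Hom T U) (w : Q.Hom S U) : Q.Hom S T :=
  sSup {u | Q.comp v u ≤ w}

/-- Transport of a `Q`-arrow along equalities of objects. -/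
def cast {S S' T T' : Q.Obj} (hS : S = S') (hT : T = T') (u : Q.Hom S T) : Q.Hom S' T' :=
  hS ▸ hT ▸ u

variable {Q}

theorem comp_mono_left {S T U : Q.Obj} {v v' : Q.Hom T U} (h : v ≤ v') (u : Q.Hom S T) :
    Q.comp v u ≤ Q.comp v' u := by
  have h1 : sSup ({v, v'} : Set (Q.Hom T U)) = v' := by
    rw [sSup_pair]; exact sup_eq_right.mpr h
  calc Q.comp v u ≤ ⨆ x ∈ ({v, v'} : Set (Q.Hom T U)), Q.comp x u :=
        le_iSup₂ (f := fun x _ => Q.comp x u) v (by simp)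
    _ = Q.comp (sSup ({v, v'} : Set (Q.Hom T U))) u := (Q.sSup_comp _ _).symm
    _ = Q.comp v' u := by rw [h1]

theorem comp_mono_right {S T U : Q.Obj} (v : Q.Hom T U) {u u' : Q.Hom S T} (h : u ≤ u') :
    Q.comp v u ≤ Q.comp v u' := by
  have h1 : sSup ({u, u'} : Set (Q.Hom S T)) = u' := by
    rw [sSup_pair]; exact sup_eq_right.mpr h
  calc Q.comp v u ≤ ⨆ x ∈ ({u, u'} : Set (Q.Hom S T)), Q.comp v x :=
        le_iSup₂ (f := fun x _ => Q.comp v x) u (by simp)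
    _ = Q.comp v (sSup ({u, u'} : Set (Q.Hom S T))) := (Q.comp_sSup _ _).symm
    _ = Q.comp v u' := by rw [h1]

theorem comp_lda_le {S T U : Q.Obj} (w : Q.Hom S U) (u : Q.Hom S T) :
    Q.comp (Q.lda w u) u ≤ w := by
  rw [lda, Q.sSup_comp]
  exact iSup₂_le fun v hv => hv

theorem comp_rda_le {S T U : Q.Obj} (v : Q.Hom T U) (w : Q.Hom S U) :
    Q.comp v (Q.rda v w) ≤ w := by
  rw [rda, Q.comp_sSup]
  exact iSup₂_le fun u hu => hu

theorem le_lda {S T U : Q.Obj} {u : Q.Hom S T} {v : Q.Hom T U} {w : Q.Hom S U} :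
    Q.comp v u ≤ w ↔ v ≤ Q.lda w u :=
  ⟨fun h => le_sSup h, fun h => le_trans (comp_mono_left h u) (comp_lda_le w u)⟩

theorem le_rda {S T U : Q.Obj} {u : Q.Hom S T} {v : Q.Hom T U} {w : Q.Hom S U} :
    Q.comp v u ≤ w ↔ u ≤ Q.rda v w :=
  ⟨fun h => le_sSup h, fun h => le_trans (comp_mono_right v h) (comp_rda_le v w)⟩

theorem cast_cast {S S' S'' T T' T'' : Q.Obj} (h1 : S = S') (h2 : T = T')
    (h3 : S' = S'') (h4 : T' = T'') (u : Q.Hom S T) :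
    Q.cast h3 h4 (Q.cast h1 h2 u) = Q.cast (h1.trans h3) (h2.trans h4) u := by
  subst h1; subst h2; subst h3; subst h4; rfl

theorem cast_mono {S S' T T' : Q.Obj} (hS : S = S') (hT : T = T') {u v : Q.Hom S T}
    (h : u ≤ v) : Q.cast hS hT u ≤ Q.cast hS hT v := by
  subst hS; subst hT; exact h

end Quantaloid
/-! ## Quantaloid-enriched categories -/

/-- A `Q`-category: a class of objects with extents and hom-arrows in `Q`. -/
structure QCat (Q : Quantaloid.{u}) : Type (u + 1) where
  Obj : Type u
  ext : Obj → Q.Obj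
  hom : ∀ X Y : Obj, Q.Hom (ext X) (ext Y)
  one_le : ∀ X, Q.one (ext X) ≤ hom X X
  comp_le : ∀ X Y Z, Q.comp (hom Y Z) (hom X Y) ≤ hom X Z

/-- A `Q`-relation between (the object classes of) two `Q`-categories. -/
abbrev QRel (Q : Quantaloid.{u}) (D E : QCat Q) : Type u :=
  ∀ (X : D.Obj) (Y : E.Obj), Q.Hom (D.ext X) (E.ext Y)

/-- The hom `Q`-relation of a `Q`-category. -/
def QCat.homRel {Q : Quantaloid.{u}} (E : QCat Q) : QRel Q E E := fun X Y => E.hom X Y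

/-- Composition of `Q`-relations. -/
def QRel.comp {Q : Quantaloid.{u}} {C D E : QCat Q} (Ψ : QRel Q D E) (Φ : QRel Q C D) :
    QRel Q C E :=
  fun X Z => ⨆ Y : D.Obj, Q.comp (Ψ Y Z) (Φ X Y)

/-- Left implication of `Q`-relations: `(Ξ ↙ Φ)(Y,Z) = ⋀_X Ξ(X,Z) ↙ Φ(X,Y)`. -/
def QRel.lda {Q : Quantaloid.{u}} {C D E : QCat Q} (Ξ : QRel Q C E) (Φ : QRel Q C D) :
    QRel Q D E :=
  fun Y Z => ⨅ X : C.Obj, Q.lda (Ξ X Z) (Φ X Y)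

/-- Right implication of `Q`-relations: `(Ψ ↘ Ξ)(X,Y) = ⋀_Z Ψ(Y,Z) ↘ Ξ(X,Z)`. -/
def QRel.rda {Q : Quantaloid.{u}} {C D E : QCat Q} (Ψ : QRel Q D E) (Ξ : QRel Q C E) :
    QRel Q C D :=
  fun X Y => ⨅ Z : E.Obj, Q.rda (Ψ Y Z) (Ξ X Z)

/-- A `Q`-relation between `Q`-categories is a `Q`-distributor if `E ∘ Φ ∘ D ≤ Φ`. -/
def IsDist {Q : Quantaloid.{u}} {D E : QCat Q} (Φ : QRel Q D E) : Prop :=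
  QRel.comp E.homRel (QRel.comp Φ D.homRel) ≤ Φ

/-- The one-object `Q`-category on an object `T` of `Q`, with hom `1_T`. -/
def singleQCat (Q : Quantaloid.{u}) (T : Q.Obj) : QCat Q where
  Obj := PUnit
  ext _ := T
  hom _ _ := Q.one T
  one_le _ := le_rfl
  comp_le _ _ _ := le_of_eq (Q.comp_one _)

/-- A sink of extent `T` on a `Q`-category `E`: a `Q`-relation `E₀ ⇸ {T}`. -/
abbrev Sink {Q : Quantaloid.{u}} (E : QCat Q) (T : Q.Obj) : Type u :=
  QRel Q E (singleQCat Q T)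

/-- A source of extent `T` on a `Q`-category `E`: a `Q`-relation `{T} ⇸ E₀`. -/
abbrev Source {Q : Quantaloid.{u}} (E : QCat Q) (T : Q.Obj) : Type u :=
  QRel Q (singleQCat Q T) E

/-- `Y` is the supremum of the sink `σ`: `Y` has extent `T` and `E(Y,−) = E ↙ σ`. -/
structure IsSup {Q : Quantaloid.{u}} (E : QCat Q) {T : Q.Obj} (σ : Sink E T) (Y : E.Obj) :
    Prop where
  ext : E.ext Y = T
  hom : ∀ Z : E.Obj, Q.cast ext rfl (E.hom Y Z) = QRel.lda E.homRel σ PUnit.unit Z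

/-- `Y` is the infimum of the source `τ`: `Y` has extent `T` and `E(−,Y) = τ ↘ E`. -/
structure IsInf {Q : Quantaloid.{u}} (E : QCat Q) {T : Q.Obj} (τ : Source E T) (Y : E.Obj) :
    Prop where
  ext : E.ext Y = T
  hom : ∀ Z : E.Obj, Q.cast rfl ext (E.hom Z Y) = QRel.rda τ E.homRel Z PUnit.unit

/-- A `Q`-category is total if every sink on it has a supremum. -/
def QCat.Total {Q : Quantaloid.{u}} (E : QCat Q) : Prop :=
  ∀ (T : Q.Obj) (σ : Sink E T), ∃ Y : E.Obj, IsSup E σ Y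

/-- A `Q`-functor between `Q`-categories. -/
structure QFun {Q : Quantaloid.{u}} (D E : QCat Q) : Type u where
  obj : D.Obj → E.Obj
  ext : ∀ X, E.ext (obj X) = D.ext X
  hom_le : ∀ X Y, D.hom X Y ≤ Q.cast (ext X) (ext Y) (E.hom (obj X) (obj Y))

/-- The graph `F_♮(X,Y) = E(FX,Y)` of a `Q`-functor. -/
def QFun.graph {Q : Quantaloid.{u}} {D E : QCat Q} (F : QFun D E) : QRel Q D E :=
  fun X Y => Q.cast (F.ext X) rfl (E.hom (F.obj X) Y)

/-- The cograph `F^♮(Y,X) = E(Y,FX)` of a `Q`-functor. -/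
def QFun.cograph {Q : Quantaloid.{u}} {D E : QCat Q} (F : QFun D E) : QRel Q E D :=
  fun Y X => Q.cast rfl (F.ext X) (E.hom Y (F.obj X))

/-- `Y` is the colimit of `F` weighted by the sink `σ`: `E(Y,−) = F_♮ ↙ σ`. -/
structure IsColim {Q : Quantaloid.{u}} {D E : QCat Q} (F : QFun D E) {T : Q.Obj}
    (σ : Sink D T) (Y : E.Obj) : Prop where
  ext : E.ext Y = T
  hom : ∀ Z : E.Obj, Q.cast ext rfl (E.hom Y Z) = QRel.lda F.graph σ PUnit.unit Z

/-- `Y` is the limit of `F` weighted by the source `τ`: `E(−,Y) = τ ↘ F^♮`. -/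
structure IsLim {Q : Quantaloid.{u}} {D E : QCat Q} (F : QFun D E) {T : Q.Obj}
    (τ : Source D T) (Y : E.Obj) : Prop where
  ext : E.ext Y = T
  hom : ∀ Z : E.Obj, Q.cast rfl ext (E.hom Z Y) = QRel.rda τ F.cograph Z PUnit.unit

/-- A `Q`-functor is dense if every object of its codomain is a weighted colimit of it. -/
def QFun.Dense {Q : Quantaloid.{u}} {D E : QCat Q} (F : QFun D E) : Prop :=
  ∀ Y : E.Obj, ∃ (T : Q.Obj) (σ : Sink D T), IsColim F σ Y

/-- A `Q`-functor is codense if every object of its codomain is a weighted limit of it. -/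
def QFun.Codense {Q : Quantaloid.{u}} {D E : QCat Q} (F : QFun D E) : Prop :=
  ∀ Y : E.Obj, ∃ (T : Q.Obj) (τ : Source D T), IsLim F τ Y

/-- The underlying (pre)order of a `Q`-category: `X ≤ Y` iff `|X| = |Y|` and
`1_{|X|} ≤ E(X,Y)`. -/
def QCat.le {Q : Quantaloid.{u}} (E : QCat Q) (X Y : E.Obj) : Prop :=
  ∃ h : E.ext X = E.ext Y, Q.cast rfl h (Q.one (E.ext X)) ≤ E.hom X Y

/-- `X ≅ Y` in the underlying order of a `Q`-category. -/
def QCat.iso {Q : Quantaloid.{u}} (E : QCat Q) (X Y : E.Obj) : Prop :=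
  E.le X Y ∧ E.le Y X

/-- A `Q`-category is separated if isomorphic objects are equal. -/
def QCat.Separated {Q : Quantaloid.{u}} (E : QCat Q) : Prop :=
  ∀ X Y : E.Obj, E.iso X Y → X = Y

/-- The identity `Q`-functor. -/
def QFun.id {Q : Quantaloid.{u}} (E : QCat Q) : QFun E E where
  obj X := X
  ext _ := rfl
  hom_le _ _ := le_rfl

/-- Composition of `Q`-functors. -/
def QFun.comp {Q : Quantaloid.{u}} {C D E : QCat Q} (G : QFun D E) (F : QFun C D) :
    QFun C E where
  obj X := G.obj (F.obj X)
  ext X := (G.ext (F.obj X)).trans (F.ext X)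
  hom_le X Y := by
    refine le_trans (F.hom_le X Y) ?_
    refine le_trans (Quantaloid.cast_mono (F.ext X) (F.ext Y)
      (G.hom_le (F.obj X) (F.obj Y))) ?_
    rw [Quantaloid.cast_cast]

/-- The full `Q`-subcategory of `E` on the objects satisfying `P`. -/
def QCat.full {Q : Quantaloid.{u}} (E : QCat Q) (P : E.Obj → Prop) : QCat Q where
  Obj := {X : E.Obj // P X}
  ext X := E.ext X.1
  hom X Y := E.hom X.1 Y.1
  one_le X := E.one_le X.1
  comp_le X Y Z := E.comp_le X.1 Y.1 Z.1

/-- The inclusion `Q`-functor of a full `Q`-subcategory. -/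
def QCat.incl {Q : Quantaloid.{u}} (E : QCat Q) (P : E.Obj → Prop) :
    QFun (E.full P) E where
  obj X := X.1
  ext _ := rfl
  hom_le _ _ := le_rfl

/-- The full `Q`-subcategory of fixed points of an endo-`Q`-functor. -/
def QCat.fix {Q : Quantaloid.{u}} (E : QCat Q) (F : QFun E E) : QCat Q :=
  E.full (fun X => E.iso (F.obj X) X)

/-- Adjoint `Q`-functors: `L ⊣ R` iff `E(LX,Y) = D(X,RY)`. -/
def QAdj {Q : Quantaloid.{u}} {D E : QCat Q} (L : QFun D E) (R : QFun E D) : Prop :=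
  ∀ (X : D.Obj) (Y : E.Obj), L.graph X Y = Q.cast rfl (R.ext Y) (D.hom X (R.obj Y))

/-- An essentially surjective `Q`-functor. -/
def QFun.EssSurj {Q : Quantaloid.{u}} {D E : QCat Q} (F : QFun D E) : Prop :=
  ∀ Y : E.Obj, ∃ X : D.Obj, E.iso Y (F.obj X)

/-- Equivalence of `Q`-categories. -/
def QEquiv {Q : Quantaloid.{u}} (D E : QCat Q) : Prop :=
  ∃ (F : QFun D E) (G : QFun E D),
    (∀ X, D.iso (G.obj (F.obj X)) X) ∧ (∀ Y, E.iso (F.obj (G.obj Y)) Y)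

/-- Isomorphism of `Q`-categories. -/
def QIso {Q : Quantaloid.{u}} (D E : QCat Q) : Prop :=
  ∃ (F : QFun D E) (G : QFun E D),
    (∀ X, G.obj (F.obj X) = X) ∧ (∀ Y, F.obj (G.obj Y) = Y)

/-- Tensor: `Y = f ⊗ X` iff `E(Y,−) = E(X,−) ↙ f`. -/
structure IsTensor {Q : Quantaloid.{u}} (E : QCat Q) {T : Q.Obj} (X : E.Obj)
    (f : Q.Hom (E.ext X) T) (Y : E.Obj) : Prop where
  ext : E.ext Y = T
  hom : ∀ Z : E.Obj, Q.cast ext rfl (E.hom Y Z) = Q.lda (E.hom X Z) f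

/-- Cotensor: `Y = g ⤳ X` iff `E(−,Y) = g ↘ E(−,X)`. -/
structure IsCotensor {Q : Quantaloid.{u}} (E : QCat Q) {T : Q.Obj} (X : E.Obj)
    (g : Q.Hom T (E.ext X)) (Y : E.Obj) : Prop where
  ext : E.ext Y = T
  hom : ∀ Z : E.Obj, Q.cast rfl ext (E.hom Z Y) = Q.rda g (E.hom Z X)
/-! ## The Isbell adjunction and its fixed points -/

section MCat

variable {Q : Quantaloid.{u}} {D E : QCat Q}

/-- The Isbell upper map of a `Q`-distributor `Φ : D ⇸ E` on (pre)sheaves: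
`Φ↑σ = Φ ↙ σ`. -/
def isbellUp (Φ : QRel Q D E) {T : Q.Obj} (σ : Sink D T) : Source E T :=
  QRel.lda Φ σ

/-- The Isbell lower map of a `Q`-distributor `Φ : D ⇸ E` on (co)presheaves:
`Φ↓τ = τ ↘ Φ`. -/
def isbellDown (Φ : QRel Q D E) {T : Q.Obj} (τ : Source E T) : Sink D T :=
  QRel.rda τ Φ

/-- `MΦ = Fix(Φ↓Φ↑)`: the full `Q`-subcategory of the presheaf `Q`-category of `D`
consisting of the presheaves fixed by the Isbell adjunction induced by `Φ`. -/
def MCat (Φ : QRel Q D E) : QCat Q where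
  Obj := Σ T : Q.Obj, {σ : Sink D T // IsDist σ ∧ isbellDown Φ (isbellUp Φ σ) = σ}
  ext p := p.1
  hom p q := QRel.lda q.2.1 p.2.1 PUnit.unit PUnit.unit
  one_le p := by
    refine le_iInf fun X => Quantaloid.le_lda.mp ?_
    exact le_of_eq (Q.one_comp _)
  comp_le p q r := by
    refine le_iInf fun X => Quantaloid.le_lda.mp ?_
    refine le_of_eq_of_le (Q.comp_assoc _ _ _) ?_
    have h1 : Q.comp (QRel.lda q.2.1 p.2.1 PUnit.unit PUnit.unit) (p.2.1 X PUnit.unit) ≤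
        q.2.1 X PUnit.unit := by
      refine le_trans (Quantaloid.comp_mono_left (iInf_le _ X) _) ?_
      exact Quantaloid.comp_lda_le _ _
    refine le_trans (Quantaloid.comp_mono_right _ h1) ?_
    refine le_trans (Quantaloid.comp_mono_left (iInf_le _ X) _) ?_
    exact Quantaloid.comp_lda_le _ _

end MCat
/-! ## Concrete categories over a base category -/

open CategoryTheory

/-- Transport of a morphism of `B` along equalities of objects. -/
def hcast {B : Type u} [Category.{u} B] {S S' T T' : B} (hS : S = S') (hT : T = T')
    (f : S ⟶ T) : S' ⟶ T' :=
  hS ▸ hT ▸ f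

/-- Transport of a set of morphisms of `B` along equalities of objects. -/
def scast {B : Type u} [Category.{u} B] {S S' T T' : B} (hS : S = S') (hT : T = T')
    (s : Set (S ⟶ T)) : Set (S' ⟶ T') :=
  hcast hS hT '' s

theorem hcast_hcast {B : Type u} [Category.{u} B] {S S' S'' T T' T'' : B}
    (h1 : S = S') (h2 : T = T') (h3 : S' = S'') (h4 : T' = T'') (f : S ⟶ T) :
    hcast h3 h4 (hcast h1 h2 f) = hcast (h1.trans h3) (h2.trans h4) f := by
  subst h1; subst h2; subst h3; subst h4; rfl

/-- A concrete category over a base category `B`, described by its objects, extents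
and hom-sets of `B`-morphisms. -/
structure ConcCat (B : Type u) [Category.{u} B] : Type (u + 1) where
  Obj : Type u
  ext : Obj → B
  hom : ∀ X Y : Obj, Set (ext X ⟶ ext Y)
  id_mem : ∀ X, 𝟙 (ext X) ∈ hom X X
  comp_mem : ∀ {X Y Z : Obj} {f : ext X ⟶ ext Y} {g : ext Y ⟶ ext Z},
      f ∈ hom X Y → g ∈ hom Y Z → f ≫ g ∈ hom X Z

variable {B : Type u} [Category.{u} B]

/-- A concrete functor over `B`. -/
structure ConcFun (D E : ConcCat B) : Type u where
  obj : D.Obj → E.Obj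
  ext : ∀ X, E.ext (obj X) = D.ext X
  mem : ∀ {X Y : D.Obj} {f : D.ext X ⟶ D.ext Y}, f ∈ D.hom X Y →
      hcast (ext X).symm (ext Y).symm f ∈ E.hom (obj X) (obj Y)

/-- The underlying (pre)order of a concrete category: `X ≤ Y` iff `|X| = |Y|` and
`1_{|X|} ∈ E(X,Y)`. -/
def ConcCat.le (E : ConcCat B) (X Y : E.Obj) : Prop :=
  ∃ h : E.ext X = E.ext Y, hcast rfl h (𝟙 (E.ext X)) ∈ E.hom X Y

/-- `X ≅ Y` in the underlying order of a concrete category. -/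
def ConcCat.iso (E : ConcCat B) (X Y : E.Obj) : Prop :=
  E.le X Y ∧ E.le Y X

/-- The identity concrete functor. -/
def ConcFun.id (E : ConcCat B) : ConcFun E E where
  obj X := X
  ext _ := rfl
  mem hf := hf

/-- Composition of concrete functors. -/
def ConcFun.comp {C D E : ConcCat B} (G : ConcFun D E) (F : ConcFun C D) :
    ConcFun C E where
  obj X := G.obj (F.obj X)
  ext X := (G.ext (F.obj X)).trans (F.ext X)
  mem {X Y f} hf := by
    have h := G.mem (F.mem hf)
    rw [hcast_hcast] at h
    exact h

/-- The full concrete subcategory on the objects satisfying `P`. -/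
def ConcCat.full (E : ConcCat B) (P : E.Obj → Prop) : ConcCat B where
  Obj := {X : E.Obj // P X}
  ext X := E.ext X.1
  hom X Y := E.hom X.1 Y.1
  id_mem X := E.id_mem X.1
  comp_mem hf hg := E.comp_mem hf hg

/-- The inclusion concrete functor of a full subcategory. -/
def ConcCat.incl (E : ConcCat B) (P : E.Obj → Prop) : ConcFun (E.full P) E where
  obj X := X.1
  ext _ := rfl
  mem hf := hf

/-- The full subcategory of fixed points of an endo concrete functor. -/
def ConcCat.fix (E : ConcCat B) (F : ConcFun E E) : ConcCat B :=
  E.full (fun X => E.iso (F.obj X) X)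

/-- A Galois correspondence `(L,R)` between concrete categories:
`E(LX,Y) = D(X,RY)` as subsets of `B(|X|,|Y|)`. -/
def Galois {D E : ConcCat B} (L : ConcFun D E) (R : ConcFun E D) : Prop :=
  ∀ (X : D.Obj) (Y : E.Obj),
    scast (L.ext X) rfl (E.hom (L.obj X) Y) = scast rfl (R.ext Y) (D.hom X (R.obj Y))

/-- An essentially surjective concrete functor. -/
def ConcFun.EssSurj {D E : ConcCat B} (F : ConcFun D E) : Prop :=
  ∀ Y : E.Obj, ∃ X : D.Obj, E.iso Y (F.obj X)

/-- Concrete equivalence of concrete categories. -/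
def ConcEquiv (D E : ConcCat B) : Prop :=
  ∃ (F : ConcFun D E) (G : ConcFun E D),
    (∀ X, D.iso (G.obj (F.obj X)) X) ∧ (∀ Y, E.iso (F.obj (G.obj Y)) Y)

/-- `Y` is an initial lifting of the `E`-structured source `(g_i : T → |X_i|)`. -/
structure IsInitialLifting (E : ConcCat B) {T : B} {ι : Type u} (X : ι → E.Obj)
    (g : ∀ i, T ⟶ E.ext (X i)) (Y : E.Obj) : Prop where
  ext : E.ext Y = T
  mem : ∀ i, hcast ext.symm rfl (g i) ∈ E.hom Y (X i)
  initial : ∀ (Z : E.Obj) (f : E.ext Z ⟶ T),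
      (∀ i, f ≫ g i ∈ E.hom Z (X i)) → hcast rfl ext.symm f ∈ E.hom Z Y

/-- `Y` is a final lifting of the `E`-structured sink `(f_i : |X_i| → T)`. -/
structure IsFinalLifting (E : ConcCat B) {T : B} {ι : Type u} (X : ι → E.Obj)
    (f : ∀ i, E.ext (X i) ⟶ T) (Y : E.Obj) : Prop where
  ext : E.ext Y = T
  mem : ∀ i, hcast rfl ext.symm (f i) ∈ E.hom (X i) Y
  final : ∀ (Z : E.Obj) (g : T ⟶ E.ext Z),
      (∀ i, f i ≫ g ∈ E.hom (X i) Z) → hcast ext.symm rfl g ∈ E.hom Y Z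

/-- A concrete category is topological over `B` if every structured source admits
an initial lifting. -/
def Topological (E : ConcCat B) : Prop :=
  ∀ (T : B) (ι : Type u) (X : ι → E.Obj) (g : ∀ i, T ⟶ E.ext (X i)),
    ∃ Y : E.Obj, IsInitialLifting E X g Y

/-- A concrete functor `F : D → E` is initially dense if every object of `E` is the
domain of an initial source with codomains in the image of `F`. -/
def InitiallyDense {D E : ConcCat B} (F : ConcFun D E) : Prop :=
  ∀ Y : E.Obj, ∃ (ι : Type u) (X : ι → D.Obj) (g : ∀ i, E.ext Y ⟶ E.ext (F.obj (X i))),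
    (∀ i, g i ∈ E.hom Y (F.obj (X i))) ∧
    ∀ (Z : E.Obj) (f : E.ext Z ⟶ E.ext Y),
      (∀ i, f ≫ g i ∈ E.hom Z (F.obj (X i))) → f ∈ E.hom Z Y

/-- A concrete functor `F : D → E` is finally dense if every object of `E` is the
codomain of a final sink with domains in the image of `F`. -/
def FinallyDense {D E : ConcCat B} (F : ConcFun D E) : Prop :=
  ∀ Y : E.Obj, ∃ (ι : Type u) (X : ι → D.Obj) (f : ∀ i, E.ext (F.obj (X i)) ⟶ E.ext Y),
    (∀ i, f i ∈ E.hom (F.obj (X i)) Y) ∧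
    ∀ (Z : E.Obj) (g : E.ext Y ⟶ E.ext Z),
      (∀ i, f i ≫ g ∈ E.hom (F.obj (X i)) Z) → g ∈ E.hom Y Z
/-! ## The free quantaloid and the `QB`-category associated to a concrete category -/

/-- The free quantaloid on a category `B`: hom-lattices are powersets of hom-sets,
with elementwise composition. -/
def freeQuantaloid (B : Type u) [Category.{u} B] : Quantaloid.{u} where
  Obj := B
  Hom S T := Set (S ⟶ T)
  lat _ _ := inferInstance
  comp := fun {S T U} g f => {h | ∃ a ∈ f, ∃ b ∈ g, a ≫ b = h}
  one S := {𝟙 S}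
  comp_assoc := by
    intro S T U V w v u
    ext h
    constructor
    · rintro ⟨a, ha, b, ⟨c, hc, d, hd, rfl⟩, rfl⟩
      exact ⟨a ≫ c, ⟨a, ha, c, hc, rfl⟩, d, hd, by simp⟩
    · rintro ⟨a, ⟨c, hc, e, he, rfl⟩, b, hb, rfl⟩
      exact ⟨c, hc, e ≫ b, ⟨e, he, b, hb, rfl⟩, by simp⟩
  comp_one := by
    intro S T u
    ext h
    simp
  one_comp := by
    intro S T u
    ext h
    simp
  comp_sSup := by
    intro S T U v s
    ext h
    simp only [Set.sSup_eq_sUnion, Set.mem_sUnion, Set.iSup_eq_iUnion, Set.mem_iUnion,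
      Set.mem_setOf_eq]
    constructor
    · rintro ⟨a, ⟨t, ht, hat⟩, b, hb, rfl⟩
      exact ⟨t, ht, a, hat, b, hb, rfl⟩
    · rintro ⟨t, ht, a, hat, b, hb, rfl⟩
      exact ⟨a, ⟨t, ht, hat⟩, b, hb, rfl⟩
  sSup_comp := by
    intro S T U s u
    ext h
    simp only [Set.sSup_eq_sUnion, Set.mem_sUnion, Set.iSup_eq_iUnion, Set.mem_iUnion,
      Set.mem_setOf_eq]
    constructor
    · rintro ⟨a, ha, b, ⟨t, ht, hbt⟩, rfl⟩
      exact ⟨t, ht, a, ha, b, hbt, rfl⟩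
    · rintro ⟨t, ht, a, ha, b, hbt, rfl⟩
      exact ⟨a, ha, b, ⟨t, ht, hbt⟩, rfl⟩

variable {B : Type u} [Category.{u} B]

instance {S T : B} : Membership (S ⟶ T) ((freeQuantaloid B).Hom S T) :=
  inferInstanceAs (Membership (S ⟶ T) (Set (S ⟶ T)))

theorem mem_qcast {S S' T T' : B} (hS : S = S') (hT : T = T')
    (s : Set (S ⟶ T)) (f : S' ⟶ T') :
    f ∈ (freeQuantaloid B).cast hS hT s ↔ hcast hS.symm hT.symm f ∈ s := by
  subst hS; subst hT; exact Iff.rfl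

/-- The `QB`-category associated to a concrete category over `B`. -/
def ConcCat.bar (E : ConcCat B) : QCat (freeQuantaloid B) where
  Obj := E.Obj
  ext := E.ext
  hom := E.hom
  one_le X := by
    intro h hh
    rcases hh with rfl
    exact E.id_mem X
  comp_le X Y Z := by
    rintro h ⟨a, ha, b, hb, rfl⟩
    exact E.comp_mem ha hb

/-- The `QB`-functor associated to a concrete functor over `B`. -/
def ConcFun.bar {D E : ConcCat B} (F : ConcFun D E) : QFun D.bar E.bar where
  obj := F.obj
  ext := F.ext
  hom_le X Y := by
    intro f hf
    exact (mem_qcast (F.ext X) (F.ext Y) _ f).mpr (F.mem hf)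

/-- The source on the `QB`-category `Ē` associated to an `E`-structured source
`(g_i : T → |X_i|)`, given by `τ̄(X) = {g_i ∣ X_i = X}`. -/
def barSource (E : ConcCat B) {T : B} {ι : Type u} (X : ι → E.Obj)
    (g : ∀ i, T ⟶ E.ext (X i)) : Source E.bar T :=
  fun _ Z => {f | ∃ (i : ι) (h : X i = Z), hcast rfl (congrArg E.ext h) (g i) = f}

/-- The sink on the `QB`-category `Ē` associated to an `E`-structured sink
`(f_i : |X_i| → T)`, given by `σ̄(X) = {f_i ∣ X_i = X}`. -/
def barSink (E : ConcCat B) {T : B} {ι : Type u} (X : ι → E.Obj)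
    (f : ∀ i, E.ext (X i) ⟶ T) : Sink E.bar T :=
  fun Z _ => {h | ∃ (i : ι) (hE : X i = Z), hcast (congrArg E.ext hE) rfl (f i) = h}
/-! ## Auxiliary lemmas for the proof -/

namespace Quantaloid

variable {Q : Quantaloid.{u}}

@[simp] theorem cast_refl {S T : Q.Obj} (u : Q.Hom S T) : Q.cast rfl rfl u = u := rfl

theorem cast_irrel {S S' T T' : Q.Obj} (h1 h1' : S = S') (h2 h2' : T = T') (u : Q.Hom S T) :
    Q.cast h1 h2 u = Q.cast h1' h2' u := rfl

theorem cast_self {S T : Q.Obj} (h1 : S = S) (h2 : T = T) (u : Q.Hom S T) :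
    Q.cast h1 h2 u = u := rfl

theorem cast_comp {S S' T T' U U' : Q.Obj} (hS : S = S') (hT : T = T') (hU : U = U')
    (v : Q.Hom T U) (u : Q.Hom S T) :
    Q.cast hS hU (Q.comp v u) = Q.comp (Q.cast hT hU v) (Q.cast hS hT u) := by
  subst hS; subst hT; subst hU; rfl

theorem cast_lda {S S' T T' U U' : Q.Obj} (hS : S = S') (hT : T = T') (hU : U = U')
    (w : Q.Hom S U) (u : Q.Hom S T) :
    Q.cast hT hU (Q.lda w u) = Q.lda (Q.cast hS hU w) (Q.cast hS hT u) := by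
  subst hS; subst hT; subst hU; rfl

theorem cast_rda {S S' T T' U U' : Q.Obj} (hS : S = S') (hT : T = T') (hU : U = U')
    (v : Q.Hom T U) (w : Q.Hom S U) :
    Q.cast hS hT (Q.rda v w) = Q.rda (Q.cast hT hU v) (Q.cast hS hU w) := by
  subst hS; subst hT; subst hU; rfl

theorem cast_iInf {ι : Sort*} {S S' T T' : Q.Obj} (hS : S = S') (hT : T = T')
    (f : ι → Q.Hom S T) :
    Q.cast hS hT (⨅ i, f i) = ⨅ i, Q.cast hS hT (f i) := by
  subst hS; subst hT; rfl

theorem cast_le_cast_iff {S S' T T' : Q.Obj} (hS : S = S') (hT : T = T')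
    {u v : Q.Hom S T} : Q.cast hS hT u ≤ Q.cast hS hT v ↔ u ≤ v := by
  subst hS; subst hT; exact Iff.rfl

theorem cast_one {S S' : Q.Obj} (h : S = S') : Q.cast h h (Q.one S) = Q.one S' := by
  subst h; rfl

theorem comp_cast_one_left {S T V : Q.Obj} (h : S = T) (u : Q.Hom V S) :
    Q.comp (Q.cast rfl h (Q.one S)) u = Q.cast rfl h u := by
  subst h; exact Q.one_comp u

theorem comp_cast_one_right {S T V : Q.Obj} (h : S = T) (u : Q.Hom S V) :
    Q.comp u (Q.cast h rfl (Q.one S)) = Q.cast h rfl u := by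
  subst h; exact Q.comp_one u

theorem lda_mono_left {S T U : Q.Obj} {w w' : Q.Hom S U} (h : w ≤ w') (u : Q.Hom S T) :
    Q.lda w u ≤ Q.lda w' u :=
  le_lda.mp (le_trans (comp_lda_le w u) h)

theorem lda_anti_right {S T U : Q.Obj} (w : Q.Hom S U) {u u' : Q.Hom S T} (h : u ≤ u') :
    Q.lda w u' ≤ Q.lda w u :=
  le_lda.mp (le_trans (comp_mono_right _ h) (comp_lda_le w u'))

theorem rda_mono_right {S T U : Q.Obj} (v : Q.Hom T U) {w w' : Q.Hom S U} (h : w ≤ w') :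
    Q.rda v w ≤ Q.rda v w' :=
  le_rda.mp (le_trans (comp_rda_le v w) h)

theorem rda_anti_left {S T U : Q.Obj} {v v' : Q.Hom T U} (h : v ≤ v') (w : Q.Hom S U) :
    Q.rda v' w ≤ Q.rda v w :=
  le_rda.mp (le_trans (comp_mono_left h _) (comp_rda_le v' w))

theorem le_iInf_lda_iff {ι : Sort*} {S : ι → Q.Obj} {T U : Q.Obj}
    {w : ∀ i, Q.Hom (S i) U} {u : ∀ i, Q.Hom (S i) T} {v : Q.Hom T U} :
    (v ≤ ⨅ i, Q.lda (w i) (u i)) ↔ ∀ i, Q.comp v (u i) ≤ w i := by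
  constructor
  · intro h i
    exact le_lda.mpr (le_trans h (iInf_le _ i))
  · intro h
    exact le_iInf fun i => le_lda.mp (h i)

theorem le_iInf_rda_iff {ι : Sort*} {S U : Q.Obj} {T : ι → Q.Obj}
    {v : ∀ i, Q.Hom U (T i)} {w : ∀ i, Q.Hom S (T i)} {x : Q.Hom S U} :
    (x ≤ ⨅ i, Q.rda (v i) (w i)) ↔ ∀ i, Q.comp (v i) x ≤ w i := by
  constructor
  · intro h i
    exact le_rda.mpr (le_trans h (iInf_le _ i))
  · intro h
    exact le_iInf fun i => le_rda.mp (h i)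

theorem eq_of_forall_le_iff' {S T : Q.Obj} {u v : Q.Hom S T}
    (h : ∀ w, w ≤ u ↔ w ≤ v) : u = v :=
  le_antisymm ((h u).mp le_rfl) ((h v).mpr le_rfl)

end Quantaloid

section IsbellFacts

open Quantaloid

variable {Q : Quantaloid.{u}} {D E : QCat Q} {Φ : QRel Q D E}

theorem phi_comp_D (hΦ : IsDist Φ) (A A' : D.Obj) (B : E.Obj) :
    Q.comp (Φ A' B) (D.hom A A') ≤ Φ A B := by
  refine le_trans ?_ (hΦ A B)
  have h1 : Q.comp (Φ A' B) (D.hom A A') ≤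
      QRel.comp Φ D.homRel A B := le_iSup (fun A' => Q.comp (Φ A' B) (D.hom A A')) A'
  refine le_trans h1 ?_
  have h2 : QRel.comp Φ D.homRel A B ≤
      Q.comp (E.hom B B) (QRel.comp Φ D.homRel A B) :=
    le_trans (le_of_eq (Q.one_comp _).symm) (comp_mono_left (E.one_le B) _)
  exact le_trans h2 (le_iSup (fun B' => Q.comp (E.hom B' B) (QRel.comp Φ D.homRel A B')) B)

theorem E_comp_phi (hΦ : IsDist Φ) (A : D.Obj) (B B' : E.Obj) :
    Q.comp (E.hom B B') (Φ A B) ≤ Φ A B' := by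
  refine le_trans ?_ (hΦ A B')
  have h1 : Φ A B ≤ QRel.comp Φ D.homRel A B :=
    le_trans (le_of_eq (Q.comp_one _).symm)
      (le_trans (comp_mono_right _ (D.one_le A))
        (le_iSup (fun A' => Q.comp (Φ A' B) (D.hom A A')) A))
  exact le_trans (comp_mono_right _ h1)
    (le_iSup (fun B'' => Q.comp (E.hom B'' B') (QRel.comp Φ D.homRel A B'')) B)

theorem isbellUp_apply {T : Q.Obj} (σ : Sink D T) (B : E.Obj) :
    isbellUp Φ σ PUnit.unit B = ⨅ A, Q.lda (Φ A B) (σ A PUnit.unit) := rfl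

theorem isbellDown_apply {T : Q.Obj} (τ : Source E T) (A : D.Obj) :
    isbellDown Φ τ A PUnit.unit = ⨅ B, Q.rda (τ PUnit.unit B) (Φ A B) := rfl

theorem isbell_unit {T : Q.Obj} (σ : Sink D T) (A : D.Obj) :
    σ A PUnit.unit ≤ isbellDown Φ (isbellUp Φ σ) A PUnit.unit := by
  rw [isbellDown_apply]
  refine le_iInf_rda_iff.mpr fun B => ?_
  exact le_trans (comp_mono_left (iInf_le _ A) _) (comp_lda_le _ _)

theorem isbell_counit {T : Q.Obj} (τ : Source E T) (B : E.Obj) :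
    τ PUnit.unit B ≤ isbellUp Φ (isbellDown Φ τ) PUnit.unit B := by
  rw [isbellUp_apply]
  refine le_iInf_lda_iff.mpr fun A => ?_
  exact le_trans (comp_mono_right _ (iInf_le _ B)) (comp_rda_le _ _)

theorem isbellUp_anti {T : Q.Obj} {σ σ' : Sink D T}
    (h : ∀ A, σ A PUnit.unit ≤ σ' A PUnit.unit) (B : E.Obj) :
    isbellUp Φ σ' PUnit.unit B ≤ isbellUp Φ σ PUnit.unit B :=
  iInf_mono fun A => lda_anti_right _ (h A)

theorem isbellDown_anti {T : Q.Obj} {τ τ' : Source E T}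
    (h : ∀ B, τ PUnit.unit B ≤ τ' PUnit.unit B) (A : D.Obj) :
    isbellDown Φ τ' A PUnit.unit ≤ isbellDown Φ τ A PUnit.unit :=
  iInf_mono fun B => rda_anti_left (h B) _

theorem up_down_up {T : Q.Obj} (σ : Sink D T) :
    isbellUp Φ (isbellDown Φ (isbellUp Φ σ)) = isbellUp Φ σ := by
  funext x B
  cases x
  exact le_antisymm (isbellUp_anti (isbell_unit σ) B) (isbell_counit (isbellUp Φ σ) B)

theorem down_up_down {T : Q.Obj} (τ : Source E T) :
    isbellDown Φ (isbellUp Φ (isbellDown Φ τ)) = isbellDown Φ τ := by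
  funext A x
  cases x
  exact le_antisymm (isbellDown_anti (isbell_counit τ) A) (isbell_unit (isbellDown Φ τ) A)

/-- The Isbell Galois correspondence on homs. -/
theorem isbell_galois {T T' : Q.Obj} (σ : Sink D T) (τ : Source E T') :
    (⨅ A, Q.lda (isbellDown Φ τ A PUnit.unit) (σ A PUnit.unit)) =
      ⨅ B, Q.rda (τ PUnit.unit B) (isbellUp Φ σ PUnit.unit B) := by
  refine eq_of_forall_le_iff' fun w => ?_
  rw [le_iInf_lda_iff, le_iInf_rda_iff]
  constructor
  · intro h B
    rw [isbellUp_apply]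
    refine le_iInf_lda_iff.mpr fun A => ?_
    rw [Q.comp_assoc]
    exact le_iInf_rda_iff.mp (h A) B
  · intro h A
    rw [isbellDown_apply]
    refine le_iInf_rda_iff.mpr fun B => ?_
    rw [← Q.comp_assoc]
    exact le_iInf_lda_iff.mp (h B) A

theorem down_isDist (hΦ : IsDist Φ) {T : Q.Obj} (τ : Source E T) :
    IsDist (isbellDown Φ τ) := by
  intro A x
  cases x
  refine iSup_le fun x' => ?_
  cases x'
  refine le_trans (le_of_eq (Q.one_comp _)) ?_
  refine iSup_le fun A' => ?_
  rw [isbellDown_apply]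
  refine le_iInf_rda_iff.mpr fun B => ?_
  rw [← Q.comp_assoc]
  refine le_trans (comp_mono_left ?_ _) (phi_comp_D hΦ A A' B)
  exact le_trans (comp_mono_right _ (iInf_le _ B)) (comp_rda_le _ _)

/-- The Yoneda sink of `A`. -/
def ySink (D : QCat Q) (A : D.Obj) : Sink D (D.ext A) := fun A' _ => D.hom A' A

/-- The co-Yoneda source of `B`. -/
def coySource (E : QCat Q) (B : E.Obj) : Source E (E.ext B) := fun _ B' => E.hom B B'

theorem up_ySink (hΦ : IsDist Φ) (A : D.Obj) (B : E.Obj) :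
    isbellUp Φ (ySink D A) PUnit.unit B = Φ A B := by
  refine eq_of_forall_le_iff' fun w => ?_
  rw [isbellUp_apply, le_iInf_lda_iff]
  constructor
  · intro h
    refine le_trans ?_ (h A)
    exact le_trans (le_of_eq (Q.comp_one w).symm) (comp_mono_right _ (D.one_le A))
  · intro h A'
    exact le_trans (comp_mono_left h _) (phi_comp_D hΦ A' A B)

theorem down_coySource (hΦ : IsDist Φ) (A : D.Obj) (B : E.Obj) :
    isbellDown Φ (coySource E B) A PUnit.unit = Φ A B := by
  refine eq_of_forall_le_iff' fun w => ?_
  rw [isbellDown_apply, le_iInf_rda_iff]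
  constructor
  · intro h
    refine le_trans ?_ (h B)
    exact le_trans (le_of_eq (Q.one_comp w).symm) (comp_mono_left (E.one_le B) _)
  · intro h B'
    exact le_trans (comp_mono_right _ h) (E_comp_phi hΦ A B B')

/-- `Φ↑σ` is a copresheaf. -/
theorem up_copresheaf (hΦ : IsDist Φ) {T : Q.Obj} (σ : Sink D T) (B B' : E.Obj) :
    Q.comp (E.hom B B') (isbellUp Φ σ PUnit.unit B) ≤ isbellUp Φ σ PUnit.unit B' := by
  rw [isbellUp_apply]
  refine le_iInf_lda_iff.mpr fun A => ?_
  rw [Q.comp_assoc]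
  refine le_trans (comp_mono_right _ ?_) (E_comp_phi hΦ A B B')
  exact le_trans (comp_mono_left (iInf_le _ A) _) (comp_lda_le _ _)

/-- Collapsing a copresheaf against co-Yoneda. -/
theorem copresheaf_collapse {T : Q.Obj} (τ : ∀ B : E.Obj, Q.Hom T (E.ext B))
    (cop : ∀ B B', Q.comp (E.hom B B') (τ B) ≤ τ B') (B : E.Obj) :
    (⨅ B', Q.rda (E.hom B B') (τ B')) = τ B := by
  refine eq_of_forall_le_iff' fun w => ?_
  rw [le_iInf_rda_iff]
  constructor
  · intro h
    refine le_trans ?_ (h B)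
    exact le_trans (le_of_eq (Q.one_comp w).symm) (comp_mono_left (E.one_le B) _)
  · intro h B'
    exact le_trans (comp_mono_right _ h) (cop B B')

end IsbellFacts

section MPhiLayer

open Quantaloid

variable {Q : Quantaloid.{u}} {D E : QCat Q} {Φ : QRel Q D E}

theorem MCat_hom_def (p q : (MCat Φ).Obj) :
    (MCat Φ).hom p q = ⨅ A, Q.lda (q.2.1 A PUnit.unit) (p.2.1 A PUnit.unit) := rfl

theorem MCat_hom_eq_rda (p q : (MCat Φ).Obj) :
    (MCat Φ).hom p q = ⨅ B, Q.rda (isbellUp Φ q.2.1 PUnit.unit B)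
      (isbellUp Φ p.2.1 PUnit.unit B) := by
  have h1 : (MCat Φ).hom p q = ⨅ A, Q.lda (isbellDown Φ (isbellUp Φ q.2.1) A PUnit.unit)
      (p.2.1 A PUnit.unit) := by rw [q.2.2.2]; rfl
  rw [h1]
  exact isbell_galois p.2.1 (isbellUp Φ q.2.1)

/-- The (fixed) Yoneda object `Φ↓Φ↑(𝓎A)` of `MΦ`. -/
def yF (hΦ : IsDist Φ) (A : D.Obj) : (MCat Φ).Obj :=
  ⟨D.ext A, ⟨isbellDown Φ (isbellUp Φ (ySink D A)),
    down_isDist hΦ _, congrArg (isbellDown Φ) (up_down_up (ySink D A))⟩⟩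

theorem phiSink_eq_down (hΦ : IsDist Φ) (B : E.Obj) :
    (fun (A : D.Obj) (_ : (singleQCat Q (E.ext B)).Obj) => Φ A B) =
      isbellDown Φ (coySource E B) := by
  funext A u
  cases u
  exact (down_coySource hΦ A B).symm

/-- The (fixed) co-Yoneda object `Φ(−,B)` of `MΦ`. -/
def yG (hΦ : IsDist Φ) (B : E.Obj) : (MCat Φ).Obj :=
  ⟨E.ext B, ⟨fun A _ => Φ A B,
    by rw [phiSink_eq_down hΦ]; exact down_isDist hΦ _,
    by rw [phiSink_eq_down hΦ, down_up_down]⟩⟩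

theorem yF_snd (hΦ : IsDist Φ) (A : D.Obj) :
    (yF hΦ A).2.1 = isbellDown Φ (isbellUp Φ (ySink D A)) := rfl

theorem hom_yF (hΦ : IsDist Φ) (A : D.Obj) (q : (MCat Φ).Obj) :
    (MCat Φ).hom (yF hΦ A) q = q.2.1 A PUnit.unit := by
  have h1 : (MCat Φ).hom (yF hΦ A) q =
      ⨅ a, Q.lda (isbellDown Φ (isbellUp Φ q.2.1) a PUnit.unit)
        ((yF hΦ A).2.1 a PUnit.unit) := by rw [q.2.2.2]; rfl
  rw [h1, isbell_galois ((yF hΦ A).2.1) (isbellUp Φ q.2.1), yF_snd]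
  erw [up_down_up (ySink D A)]
  have h2 : (⨅ B, Q.rda (isbellUp Φ q.2.1 PUnit.unit B)
      (isbellUp Φ (ySink D A) PUnit.unit B)) =
      ⨅ B, Q.rda (isbellUp Φ q.2.1 PUnit.unit B) (Φ A B) :=
    iInf_congr fun B => by rw [up_ySink hΦ]; rfl
  refine h2.trans ?_
  have h3 : (⨅ B, Q.rda (isbellUp Φ q.2.1 PUnit.unit B) (Φ A B)) =
      isbellDown Φ (isbellUp Φ q.2.1) A PUnit.unit := (isbellDown_apply _ _).symm
  rw [h3, q.2.2.2]

theorem hom_yG (hΦ : IsDist Φ) (p : (MCat Φ).Obj) (B : E.Obj) :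
    (MCat Φ).hom p (yG hΦ B) = isbellUp Φ p.2.1 PUnit.unit B := by
  have h1 : (MCat Φ).hom p (yG hΦ B) =
      ⨅ a, Q.lda (isbellDown Φ (coySource E B) a PUnit.unit) (p.2.1 a PUnit.unit) :=
    iInf_congr fun a => by
      rw [show (yG hΦ B).2.1 a PUnit.unit = Φ a B from rfl, ← down_coySource hΦ a B]; rfl
  rw [h1, isbell_galois p.2.1 (coySource E B)]
  exact copresheaf_collapse (fun B' => isbellUp Φ p.2.1 PUnit.unit B')
    (up_copresheaf hΦ p.2.1) B

theorem hom_yF_yG (hΦ : IsDist Φ) (A : D.Obj) (B : E.Obj) :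
    (MCat Φ).hom (yF hΦ A) (yG hΦ B) = Φ A B := by
  rw [hom_yF hΦ]; rfl

/-- The Yoneda-type `Q`-functor `D → MΦ`. -/
def yFF (hΦ : IsDist Φ) : QFun D (MCat Φ) where
  obj := yF hΦ
  ext _ := rfl
  hom_le A A' := by
    show D.hom A A' ≤ (MCat Φ).hom (yF hΦ A) (yF hΦ A')
    rw [hom_yF hΦ, yF_snd, isbellDown_apply]
    refine le_iInf_rda_iff.mpr fun B => ?_
    rw [up_ySink hΦ]
    exact phi_comp_D hΦ A A' B

/-- The co-Yoneda-type `Q`-functor `E → MΦ`. -/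
def yGG (hΦ : IsDist Φ) : QFun E (MCat Φ) where
  obj := yG hΦ
  ext _ := rfl
  hom_le B B' := by
    show E.hom B B' ≤ (MCat Φ).hom (yG hΦ B) (yG hΦ B')
    rw [hom_yG hΦ, isbellUp_apply]
    refine le_iInf_lda_iff.mpr fun A => ?_
    exact E_comp_phi hΦ A B B'

theorem dense_yFF (hΦ : IsDist Φ) : (yFF hΦ).Dense := by
  intro q
  refine ⟨q.1, q.2.1, rfl, fun z => ?_⟩
  refine Eq.trans (b := ⨅ A, Q.lda (z.2.1 A PUnit.unit) (q.2.1 A PUnit.unit)) rfl ?_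
  calc _ = ⨅ A, Q.lda ((yFF hΦ).graph A z) (q.2.1 A PUnit.unit) :=
      iInf_congr fun A => by
        rw [show (yFF hΦ).graph A z = (MCat Φ).hom (yF hΦ A) z from rfl, hom_yF hΦ]; rfl

theorem codense_yGG (hΦ : IsDist Φ) : (yGG hΦ).Codense := by
  intro q
  refine ⟨q.1, isbellUp Φ q.2.1, rfl, fun z => ?_⟩
  refine Eq.trans (b := ⨅ B, Q.rda (isbellUp Φ q.2.1 PUnit.unit B) (isbellUp Φ z.2.1 PUnit.unit B))
    (MCat_hom_eq_rda z q) ?_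
  calc _ = ⨅ B, Q.rda (isbellUp Φ q.2.1 PUnit.unit B) ((yGG hΦ).cograph z B) :=
      iInf_congr fun B => by
        rw [show (yGG hΦ).cograph z B = (MCat Φ).hom z (yG hΦ B) from rfl, hom_yG hΦ]; rfl

end MPhiLayer

section IsoTransport

open Quantaloid

variable {Q : Quantaloid.{u}}

theorem QCat.hom_congr {M : QCat Q} {p p' q q' : M.Obj} (hp : p = p') (hq : q = q') :
    M.hom p' q' = Q.cast (congrArg M.ext hp) (congrArg M.ext hq) (M.hom p q) := by
  subst hp; subst hq; rfl

theorem QCat.le_of_eq' {M : QCat Q} {p q : M.Obj} (h : p = q) : M.le p q := by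
  subst h; exact ⟨rfl, M.one_le p⟩

variable {X M : QCat Q}

theorem iso_hom_eq (H : QFun X M) (K : QFun M X)
    (h2 : ∀ p, H.obj (K.obj p) = p) (p q : M.Obj) :
    X.hom (K.obj p) (K.obj q) = Q.cast (K.ext p).symm (K.ext q).symm (M.hom p q) := by
  apply le_antisymm
  · refine le_trans (H.hom_le (K.obj p) (K.obj q)) ?_
    rw [QCat.hom_congr (h2 p).symm (h2 q).symm, Quantaloid.cast_cast]
  · refine le_trans (cast_mono (K.ext p).symm (K.ext q).symm (K.hom_le p q)) ?_
    rw [Quantaloid.cast_cast]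
    exact le_rfl

theorem comp_graph_eq (H : QFun X M) (K : QFun M X)
    (h1 : ∀ x, K.obj (H.obj x) = x) (h2 : ∀ p, H.obj (K.obj p) = p)
    {D : QCat Q} (F₀ : QFun D M) (A : D.Obj) (z : X.Obj) :
    (K.comp F₀).graph A z = Q.cast rfl (H.ext z) (F₀.graph A (H.obj z)) := by
  calc (K.comp F₀).graph A z
      = Q.cast ((K.comp F₀).ext A) rfl (X.hom (K.obj (F₀.obj A)) z) := rfl
    _ = Q.cast ((K.comp F₀).ext A) rfl
        (Q.cast (congrArg X.ext (rfl : K.obj (F₀.obj A) = K.obj (F₀.obj A)))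
          (congrArg X.ext (h1 z)) (X.hom (K.obj (F₀.obj A)) (K.obj (H.obj z)))) :=
      congrArg _ (QCat.hom_congr rfl (h1 z))
    _ = Q.cast ((K.comp F₀).ext A) rfl (Q.cast (congrArg X.ext rfl) (congrArg X.ext (h1 z))
        (Q.cast (K.ext (F₀.obj A)).symm (K.ext (H.obj z)).symm
          (M.hom (F₀.obj A) (H.obj z)))) := by rw [iso_hom_eq H K h2]; rfl
    _ = Q.cast rfl (H.ext z) (F₀.graph A (H.obj z)) := by
        simp only [Quantaloid.cast_cast,
          show F₀.graph A (H.obj z) =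
            Q.cast (F₀.ext A) rfl (M.hom (F₀.obj A) (H.obj z)) from rfl]
        exact Quantaloid.cast_cast _ _ _ _ _

theorem comp_cograph_eq (H : QFun X M) (K : QFun M X)
    (h1 : ∀ x, K.obj (H.obj x) = x) (h2 : ∀ p, H.obj (K.obj p) = p)
    {E : QCat Q} (G₀ : QFun E M) (B : E.Obj) (z : X.Obj) :
    (K.comp G₀).cograph z B = Q.cast (H.ext z) rfl (G₀.cograph (H.obj z) B) := by
  calc (K.comp G₀).cograph z B
      = Q.cast rfl ((K.comp G₀).ext B) (X.hom z (K.obj (G₀.obj B))) := rfl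
    _ = Q.cast rfl ((K.comp G₀).ext B)
        (Q.cast (congrArg X.ext (h1 z))
          (congrArg X.ext (rfl : K.obj (G₀.obj B) = K.obj (G₀.obj B)))
          (X.hom (K.obj (H.obj z)) (K.obj (G₀.obj B)))) :=
      congrArg _ (QCat.hom_congr (h1 z) rfl)
    _ = Q.cast rfl ((K.comp G₀).ext B) (Q.cast (congrArg X.ext (h1 z)) (congrArg X.ext rfl)
        (Q.cast (K.ext (H.obj z)).symm (K.ext (G₀.obj B)).symm
          (M.hom (H.obj z) (G₀.obj B)))) := by rw [iso_hom_eq H K h2]; rfl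
    _ = Q.cast (H.ext z) rfl (G₀.cograph (H.obj z) B) := by
        simp only [Quantaloid.cast_cast,
          show G₀.cograph (H.obj z) B =
            Q.cast rfl (G₀.ext B) (M.hom (H.obj z) (G₀.obj B)) from rfl]
        exact Quantaloid.cast_cast _ _ _ _ _

theorem dense_comp (H : QFun X M) (K : QFun M X)
    (h1 : ∀ x, K.obj (H.obj x) = x) (h2 : ∀ p, H.obj (K.obj p) = p)
    {D : QCat Q} (F₀ : QFun D M) (hd : F₀.Dense) : (K.comp F₀).Dense := by
  intro y
  obtain ⟨T, σ, hc⟩ := hd (H.obj y)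
  have eX : X.ext y = T :=
    (congrArg X.ext (h1 y)).symm.trans ((K.ext (H.obj y)).trans hc.ext)
  have e2 : ∀ z, M.ext (H.obj z) = X.ext z :=
    fun z => (K.ext (H.obj z)).symm.trans (congrArg X.ext (h1 z))
  refine ⟨T, σ, eX, fun z => ?_⟩
  apply Eq.trans
  · calc Q.cast eX rfl (X.hom y z)
      = Q.cast eX rfl (Q.cast (congrArg X.ext (h1 y)) (congrArg X.ext (h1 z))
          (X.hom (K.obj (H.obj y)) (K.obj (H.obj z)))) :=
        congrArg _ (QCat.hom_congr (h1 y) (h1 z))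
    _ = Q.cast eX rfl (Q.cast (congrArg X.ext (h1 y)) (congrArg X.ext (h1 z))
          (Q.cast (K.ext (H.obj y)).symm (K.ext (H.obj z)).symm
            (M.hom (H.obj y) (H.obj z)))) := by rw [iso_hom_eq H K h2]
    _ = Q.cast rfl (e2 z) (Q.cast hc.ext rfl (M.hom (H.obj y) (H.obj z))) := by
        rw [Quantaloid.cast_cast, Quantaloid.cast_cast, Quantaloid.cast_cast]
  calc _ = Q.cast rfl (e2 z) (⨅ A, Q.lda (F₀.graph A (H.obj z)) (σ A PUnit.unit)) := by
        rw [hc.hom (H.obj z)]; rfl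
    _ = ⨅ A, Q.lda (Q.cast rfl (e2 z) (F₀.graph A (H.obj z))) (σ A PUnit.unit) := by
        rw [cast_iInf]
        exact iInf_congr fun A => by rw [cast_lda rfl rfl (e2 z), cast_refl]
    _ = ⨅ A, Q.lda ((K.comp F₀).graph A z) (σ A PUnit.unit) :=
        iInf_congr fun A =>
          congrArg (fun t => Q.lda t (σ A PUnit.unit)) (comp_graph_eq H K h1 h2 F₀ A z).symm

theorem codense_comp (H : QFun X M) (K : QFun M X)
    (h1 : ∀ x, K.obj (H.obj x) = x) (h2 : ∀ p, H.obj (K.obj p) = p)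
    {E : QCat Q} (G₀ : QFun E M) (hd : G₀.Codense) :
    (K.comp G₀).Codense := by
  intro y
  obtain ⟨T, τ, hc⟩ := hd (H.obj y)
  have eX : X.ext y = T :=
    (congrArg X.ext (h1 y)).symm.trans ((K.ext (H.obj y)).trans hc.ext)
  have e2 : ∀ z, M.ext (H.obj z) = X.ext z :=
    fun z => (K.ext (H.obj z)).symm.trans (congrArg X.ext (h1 z))
  refine ⟨T, τ, eX, fun z => ?_⟩
  apply Eq.trans
  · calc Q.cast rfl eX (X.hom z y)
      = Q.cast rfl eX (Q.cast (congrArg X.ext (h1 z)) (congrArg X.ext (h1 y))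
          (X.hom (K.obj (H.obj z)) (K.obj (H.obj y)))) :=
        congrArg _ (QCat.hom_congr (h1 z) (h1 y))
    _ = Q.cast rfl eX (Q.cast (congrArg X.ext (h1 z)) (congrArg X.ext (h1 y))
          (Q.cast (K.ext (H.obj z)).symm (K.ext (H.obj y)).symm
            (M.hom (H.obj z) (H.obj y)))) := by rw [iso_hom_eq H K h2]
    _ = Q.cast (e2 z) rfl (Q.cast rfl hc.ext (M.hom (H.obj z) (H.obj y))) := by
        rw [Quantaloid.cast_cast, Quantaloid.cast_cast, Quantaloid.cast_cast]
  calc _ = Q.cast (e2 z) rfl (⨅ B, Q.rda (τ PUnit.unit B) (G₀.cograph (H.obj z) B)) := by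
        rw [hc.hom (H.obj z)]; rfl
    _ = ⨅ B, Q.rda (τ PUnit.unit B) (Q.cast (e2 z) rfl (G₀.cograph (H.obj z) B)) := by
        rw [cast_iInf]
        exact iInf_congr fun B => by rw [cast_rda (e2 z) rfl rfl, cast_refl]
    _ = ⨅ B, Q.rda (τ PUnit.unit B) ((K.comp G₀).cograph z B) :=
        iInf_congr fun B =>
          congrArg (fun t => Q.rda (τ PUnit.unit B) t)
            (comp_cograph_eq H K h1 h2 G₀ B z).symm

end IsoTransport

section MoreQuantaloid

open Quantaloid

variable {Q : Quantaloid.{u}}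

theorem comp_iSup {ι : Sort*} {S T U : Q.Obj} (v : Q.Hom T U) (u : ι → Q.Hom S T) :
    Q.comp v (⨆ i, u i) = ⨆ i, Q.comp v (u i) := by
  rw [show (⨆ i, u i) = sSup (Set.range u) from rfl, Q.comp_sSup, iSup_range]

theorem lda_iSup {ι : Sort*} {S T U : Q.Obj} (w : Q.Hom S U) (u : ι → Q.Hom S T) :
    Q.lda w (⨆ i, u i) = ⨅ i, Q.lda w (u i) := by
  refine eq_of_forall_le_iff' fun v => ?_
  rw [← le_lda, le_iInf_iff, comp_iSup, iSup_le_iff]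
  exact forall_congr' fun i => le_lda

theorem lda_comp {S T U V : Q.Obj} (w : Q.Hom S V) (u : Q.Hom T U) (v : Q.Hom S T) :
    Q.lda w (Q.comp u v) = Q.lda (Q.lda w v) u := by
  refine eq_of_forall_le_iff' fun x => ?_
  rw [← le_lda, ← le_lda, ← le_lda, ← Q.comp_assoc]

theorem comp_cast_one_right' {S T V : Q.Obj} (h : S = T) (u : Q.Hom T V) :
    Q.comp u (Q.cast rfl h (Q.one S)) = Q.cast h.symm rfl u := by
  subst h; exact Q.comp_one u

end MoreQuantaloid

section Backward

open Quantaloid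

variable {Q : Quantaloid.{u}} {D E : QCat Q} {Φ : QRel Q D E} {X : QCat Q}
variable {F : QFun D X} {G : QFun E X}

theorem dense_formula (hF : F.Dense) (x z : X.Obj) :
    (⨅ A, Q.lda (F.graph A z) (F.graph A x)) = X.hom x z := by
  apply le_antisymm
  · obtain ⟨T, σ, hext, hhom⟩ := hF x
    subst hext
    have hs : ∀ A, σ A PUnit.unit ≤ F.graph A x := by
      intro A
      have h0' := hhom x
      rw [cast_refl] at h0'
      have h0 : Q.one (X.ext x) ≤ ⨅ A, Q.lda (F.graph A x) (σ A PUnit.unit) :=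
        le_trans (X.one_le x) (le_of_eq h0')
      exact le_trans (le_of_eq (Q.one_comp _).symm) (le_iInf_lda_iff.mp h0 A)
    have h1 : (⨅ A, Q.lda (F.graph A z) (F.graph A x)) ≤
        ⨅ A, Q.lda (F.graph A z) (σ A PUnit.unit) :=
      iInf_mono fun A => lda_anti_right _ (hs A)
    have h2 := hhom z
    rw [cast_refl] at h2
    exact le_trans h1 (le_of_eq h2.symm)
  · refine le_iInf_lda_iff.mpr fun A => ?_
    exact le_trans (le_of_eq (cast_comp (F.ext A) rfl rfl _ _).symm)
      (cast_mono (F.ext A) rfl (X.comp_le (F.obj A) x z))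

theorem codense_formula (hG : G.Codense) (x z : X.Obj) :
    (⨅ B, Q.rda (G.cograph x B) (G.cograph z B)) = X.hom z x := by
  apply le_antisymm
  · obtain ⟨T, τ, hext, hhom⟩ := hG x
    subst hext
    have hs : ∀ B, τ PUnit.unit B ≤ G.cograph x B := by
      intro B
      have h0' := hhom x
      rw [cast_refl] at h0'
      have h0 : Q.one (X.ext x) ≤ ⨅ B, Q.rda (τ PUnit.unit B) (G.cograph x B) :=
        le_trans (X.one_le x) (le_of_eq h0')
      exact le_trans (le_of_eq (Q.comp_one _).symm) (le_iInf_rda_iff.mp h0 B)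
    have h1 : (⨅ B, Q.rda (G.cograph x B) (G.cograph z B)) ≤
        ⨅ B, Q.rda (τ PUnit.unit B) (G.cograph z B) :=
      iInf_mono fun B => rda_anti_left (hs B) _
    have h2 := hhom z
    rw [cast_refl] at h2
    exact le_trans h1 (le_of_eq h2.symm)
  · refine le_iInf_rda_iff.mpr fun B => ?_
    exact le_trans (le_of_eq (cast_comp rfl rfl (G.ext B) _ _).symm)
      (cast_mono rfl (G.ext B) (X.comp_le z x (G.obj B)))

variable (F G) in
/-- The hom relation `Φ(A,B) = X(FA,GB)`. -/
def HomFormula : Prop :=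
  ∀ (A : D.Obj) (B : E.Obj),
    Φ A B = Q.cast (F.ext A) (G.ext B) (X.hom (F.obj A) (G.obj B))

theorem phi_eq_graph (hFG : HomFormula (Φ := Φ) F G) (A : D.Obj) (B : E.Obj) :
    Φ A B = Q.cast rfl (G.ext B) (F.graph A (G.obj B)) := by
  rw [hFG A B, show F.graph A (G.obj B) =
    Q.cast (F.ext A) rfl (X.hom (F.obj A) (G.obj B)) from rfl, Quantaloid.cast_cast]

theorem phi_eq_cograph (hFG : HomFormula (Φ := Φ) F G) (A : D.Obj) (B : E.Obj) :
    Φ A B = Q.cast (F.ext A) rfl (G.cograph (F.obj A) B) := by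
  rw [hFG A B, show G.cograph (F.obj A) B =
    Q.cast rfl (G.ext B) (X.hom (F.obj A) (G.obj B)) from rfl, Quantaloid.cast_cast]

variable (F) in
/-- The sink `X(F−,x)` on `D`. -/
def hSink (x : X.Obj) : Sink D (X.ext x) := fun A _ => F.graph A x

variable (G) in
/-- The source `X(x,G−)` on `E`. -/
def gSource (x : X.Obj) : Source E (X.ext x) := fun _ B => G.cograph x B

theorem up_hSink (hF : F.Dense) (hFG : HomFormula (Φ := Φ) F G) (x : X.Obj) :
    isbellUp Φ (hSink F x) = gSource G x := by
  funext u B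
  cases u
  refine Eq.trans (b := ⨅ A, Q.lda (Φ A B) (F.graph A x)) rfl ?_
  calc _ = ⨅ A, Q.lda (Q.cast rfl (G.ext B) (F.graph A (G.obj B))) (F.graph A x) :=
      iInf_congr fun A => by rw [← phi_eq_graph hFG]
    _ = Q.cast rfl (G.ext B) (⨅ A, Q.lda (F.graph A (G.obj B)) (F.graph A x)) := by
      rw [cast_iInf]
      exact iInf_congr fun A => by rw [cast_lda rfl rfl (G.ext B), cast_refl]
    _ = Q.cast rfl (G.ext B) (X.hom x (G.obj B)) := by rw [dense_formula hF]

theorem down_gSource (hG : G.Codense) (hFG : HomFormula (Φ := Φ) F G) (x : X.Obj) :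
    isbellDown Φ (gSource G x) = hSink F x := by
  funext A u
  cases u
  refine Eq.trans (b := ⨅ B, Q.rda (G.cograph x B) (Φ A B)) rfl ?_
  calc _ = ⨅ B, Q.rda (G.cograph x B) (Q.cast (F.ext A) rfl (G.cograph (F.obj A) B)) :=
      iInf_congr fun B => by rw [← phi_eq_cograph hFG]
    _ = Q.cast (F.ext A) rfl (⨅ B, Q.rda (G.cograph x B) (G.cograph (F.obj A) B)) := by
      rw [cast_iInf]
      exact iInf_congr fun B => by rw [cast_rda (F.ext A) rfl rfl, cast_refl]
    _ = Q.cast (F.ext A) rfl (X.hom (F.obj A) x) := by rw [codense_formula hG]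

variable (Φ F) in
/-- The object `X(F−,x)` of `MΦ` associated to `x : X`. -/
def hObj (hΦ : IsDist Φ) (hF : F.Dense) (hG : G.Codense)
    (hFG : HomFormula (Φ := Φ) F G) (x : X.Obj) : (MCat Φ).Obj :=
  ⟨X.ext x, ⟨hSink F x,
    by rw [← down_gSource hG hFG x]; exact down_isDist hΦ _,
    by rw [up_hSink hF hFG x, down_gSource hG hFG x]⟩⟩

theorem hom_hObj (hΦ : IsDist Φ) (hF : F.Dense) (hG : G.Codense)
    (hFG : HomFormula (Φ := Φ) F G) (x y : X.Obj) :
    (MCat Φ).hom (hObj Φ F hΦ hF hG hFG x) (hObj Φ F hΦ hF hG hFG y) = X.hom x y := by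
  refine Eq.trans (b := ⨅ A, Q.lda (F.graph A y) (F.graph A x)) rfl ?_
  calc _ = X.hom x y := dense_formula hF x y

end Backward

section Final

open Quantaloid

variable {Q : Quantaloid.{u}}

theorem lda_iInf_left {ι : Sort*} {S T U : Q.Obj} (w : ι → Q.Hom S U) (u : Q.Hom S T) :
    Q.lda (⨅ i, w i) u = ⨅ i, Q.lda (w i) u := by
  refine eq_of_forall_le_iff' fun v => ?_
  rw [← le_lda, le_iInf_iff, le_iInf_iff]
  exact forall_congr' fun i => le_lda

variable {D E : QCat Q} {Φ : QRel Q D E} {X : QCat Q}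
variable {F : QFun D X} {G : QFun E X}

theorem graph_formula (A : D.Obj) (z : X.Obj) :
    (⨅ x', Q.lda (X.hom x' z) (F.cograph x' A)) = F.graph A z := by
  refine eq_of_forall_le_iff' fun v => ?_
  rw [le_iInf_lda_iff]
  constructor
  · intro h
    have h2 : Q.cast (F.ext A).symm rfl v ≤ X.hom (F.obj A) z :=
      le_trans (le_of_eq (comp_cast_one_right' (F.ext A) v).symm)
        (le_trans (comp_mono_right v (cast_mono rfl (F.ext A) (X.one_le (F.obj A))))
          (h (F.obj A)))
    have h3 := cast_mono (F.ext A) rfl h2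
    rw [Quantaloid.cast_cast] at h3
    exact h3
  · intro h x'
    exact le_trans (comp_mono_left h _)
      (le_trans (le_of_eq (cast_comp rfl (F.ext A) rfl _ _).symm)
        (X.comp_le x' (F.obj A) z))

theorem hObj_surj (hΦ : IsDist Φ) (hF : F.Dense) (hG : G.Codense)
    (hFG : HomFormula (Φ := Φ) F G) (htot : X.Total) (p : (MCat Φ).Obj) :
    ∃ x, hObj Φ F hΦ hF hG hFG x = p := by
  rcases p with ⟨T, σ, hdist, hfixp⟩
  obtain ⟨x, hext, hhom⟩ := htot T (QRel.comp σ F.cograph)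
  subst hext
  have claimA : ∀ z, X.hom x z = ⨅ A, Q.lda (F.graph A z) (σ A PUnit.unit) := by
    intro z
    have h0 := hhom z
    rw [cast_refl] at h0
    rw [h0]
    calc QRel.lda X.homRel (QRel.comp σ F.cograph) PUnit.unit z
        = ⨅ x', Q.lda (X.hom x' z) (⨆ A, Q.comp (σ A PUnit.unit) (F.cograph x' A)) := rfl
      _ = ⨅ x', ⨅ A, Q.lda (Q.lda (X.hom x' z) (F.cograph x' A)) (σ A PUnit.unit) :=
        iInf_congr fun x' => by
          rw [lda_iSup]
          exact iInf_congr fun A => by rw [lda_comp]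
      _ = ⨅ A, ⨅ x', Q.lda (Q.lda (X.hom x' z) (F.cograph x' A)) (σ A PUnit.unit) := by
        rw [iInf_comm]
      _ = ⨅ A, Q.lda (F.graph A z) (σ A PUnit.unit) := by
        refine iInf_congr fun A => ?_
        rw [← graph_formula A z, lda_iInf_left]
  have claimB : hSink F x = σ := by
    funext A u
    cases u
    apply le_antisymm
    · have hup : ∀ B, isbellUp Φ σ PUnit.unit B = G.cograph x B := by
        intro B
        apply Eq.trans
        · calc isbellUp Φ σ PUnit.unit B
            = ⨅ A', Q.lda (Φ A' B) (σ A' PUnit.unit) := rfl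
          _ = ⨅ A', Q.lda (Q.cast rfl (G.ext B) (F.graph A' (G.obj B)))
              (σ A' PUnit.unit) := iInf_congr fun A' => by rw [← phi_eq_graph hFG]
          _ = Q.cast rfl (G.ext B)
              (⨅ A', Q.lda (F.graph A' (G.obj B)) (σ A' PUnit.unit)) := by
            rw [cast_iInf]
            exact iInf_congr fun A' => by rw [cast_lda rfl rfl (G.ext B), cast_refl]
        calc _ = Q.cast rfl (G.ext B) (X.hom x (G.obj B)) := by rw [← claimA]; rfl
          _ = G.cograph x B := rfl
      show F.graph A x ≤ σ A PUnit.unit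
      rw [← hfixp, isbellDown_apply]
      refine le_iInf_rda_iff.mpr fun B => ?_
      rw [hup B]
      refine le_trans (le_of_eq (cast_comp (F.ext A) rfl (G.ext B) _ _).symm) ?_
      rw [hFG A B]
      exact cast_mono _ _ (X.comp_le (F.obj A) x (G.obj B))
    · have h1 : Q.one (X.ext x) ≤ ⨅ A, Q.lda (F.graph A x) (σ A PUnit.unit) :=
        le_trans (X.one_le x) (le_of_eq (claimA x))
      exact le_trans (le_of_eq (Q.one_comp _).symm) (le_iInf_lda_iff.mp h1 A)
  subst claimB
  exact ⟨x, rfl⟩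

theorem hObj_inj (hΦ : IsDist Φ) (hF : F.Dense) (hG : G.Codense)
    (hFG : HomFormula (Φ := Φ) F G) (hsep : X.Separated) (x y : X.Obj)
    (h : hObj Φ F hΦ hF hG hFG x = hObj Φ F hΦ hF hG hFG y) : x = y := by
  obtain ⟨e1, hle1⟩ := QCat.le_of_eq' h
  obtain ⟨e2, hle2⟩ := QCat.le_of_eq' h.symm
  refine hsep x y ⟨⟨e1, ?_⟩, ⟨e2, ?_⟩⟩
  · exact le_trans hle1 (le_of_eq (hom_hObj hΦ hF hG hFG x y))
  · exact le_trans hle2 (le_of_eq (hom_hObj hΦ hF hG hFG y x))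

theorem backward_dir (hΦ : IsDist Φ) (hsep : X.Separated) (htot : X.Total)
    (hF : F.Dense) (hG : G.Codense) (hFG : HomFormula (Φ := Φ) F G) :
    QIso X (MCat Φ) := by
  choose k hk using hObj_surj hΦ hF hG hFG htot
  refine ⟨⟨hObj Φ F hΦ hF hG hFG, fun _ => rfl,
      fun x y => le_of_eq (hom_hObj hΦ hF hG hFG x y).symm⟩,
    ⟨k, fun p => congrArg Sigma.fst (hk p), fun p q => ?_⟩,
    fun x => hObj_inj hΦ hF hG hFG hsep _ _ (hk _), hk⟩
  rw [QCat.hom_congr (hk p) (hk q), hom_hObj hΦ hF hG hFG]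
  exact le_rfl

end Final

/-- Theorem 7.11: for a `Q`-distributor `Φ : D ⇸ E`, a separated
total `Q`-category `X` is isomorphic to `MΦ = Fix(Φ↓Φ↑)` if and only if there exist a
dense `Q`-functor `F : D → X` and a codense `Q`-functor `G : E → X` with
`Φ(A,B) = X(FA,GB)` for all objects `A` of `D` and `B` of `E`. -/
theorem MCat_representation {Q : Quantaloid.{u}} {D E : QCat Q}
    (Φ : QRel Q D E) (hΦ : IsDist Φ)
    (X : QCat Q) (hsep : X.Separated) (htot : X.Total) :
    QIso X (MCat Φ) ↔
      ∃ (F : QFun D X) (G : QFun E X), F.Dense ∧ G.Codense ∧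
        ∀ (A : D.Obj) (B : E.Obj),
          Φ A B = Q.cast (F.ext A) (G.ext B) (X.hom (F.obj A) (G.obj B)) := by
  constructor
  · rintro ⟨H, K, hKH, hHK⟩
    refine ⟨K.comp (yFF hΦ), K.comp (yGG hΦ),
      dense_comp H K hKH hHK _ (dense_yFF hΦ),
      codense_comp H K hKH hHK _ (codense_yGG hΦ), fun A B => ?_⟩
    show Φ A B = Q.cast _ _ (X.hom (K.obj (yF hΦ A)) (K.obj (yG hΦ B)))
    rw [iso_hom_eq H K hHK]
    exact (hom_yF_yG hΦ A B).symm.trans (Quantaloid.cast_cast (K.ext _).symm (K.ext _).symm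
      ((K.comp (yFF hΦ)).ext A) ((K.comp (yGG hΦ)).ext B) ((MCat Φ).hom (yF hΦ A) (yG hΦ B))).symm
  · rintro ⟨F, G, hF, hG, hFG⟩
    exact backward_dir hΦ hsep htot hF hG hFG
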